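/- Let k ≥ 2 and let I be the space of homogeneous quadratic polynomials in variables x_0,...,x_k spanned by the 2×2 minors of the 2×k Hankel matrix with rows (0!x_0, ..., (k-1)!x_{k-1}) and (1!x_1, ..., k!x_k). Then I contains no nonzero quadratic form of rank ≤ 2. -/

import Mathlib

open Polynomial in
lemma vanish_aux {k : ℕ} (v : Fin (k+1) → ℝ)
    (h : ∀ t : ℝ, ∑ i : Fin (k+1), v i * (t ^ (i:ℕ) / ((i:ℕ).factorial : ℝ)) = 0) :
    v = 0 := by
  have hp : (∑ i : Fin (k+1), C (v i / ((i:ℕ).factorial : ℝ)) * X ^ (i:ℕ)) = (0 : ℝ[X]) := by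
    apply Polynomial.funext
    intro t
    simp only [eval_finset_sum, eval_mul, eval_C, eval_pow, eval_X, eval_zero]
    rw [← h t]
    exact Finset.sum_congr rfl fun i _ => by ring
  funext i
  have h2 := congrArg (fun p => Polynomial.coeff p (i:ℕ)) hp
  simp only [Polynomial.finset_sum_coeff, Polynomial.coeff_C_mul, Polynomial.coeff_X_pow,
    Polynomial.coeff_zero] at h2
  rw [Finset.sum_eq_single i] at h2
  · rw [if_pos rfl, mul_one] at h2
    have hfac : ((i:ℕ).factorial : ℝ) ≠ 0 := Nat.cast_ne_zero.mpr (Nat.factorial_ne_zero _)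
    have := (div_eq_zero_iff.mp h2).resolve_right hfac
    simpa using this
  · intro b _ hb
    rw [if_neg (by simpa [Fin.val_eq_val] using hb.symm), mul_zero]
  · simp

open Polynomial in
lemma posneg_aux {k : ℕ} (v w : Fin (k+1) → ℝ) (μ ν : ℝ)
    (hvv : ∑ i : Fin (k+1), v i * v i = 1)
    (hvw : ∑ i : Fin (k+1), v i * w i = 0)
    (hμ : 0 < μ) (hν : ν < 0)
    (h : ∀ t : ℝ, μ * (∑ i : Fin (k+1), v i * (t ^ (i:ℕ) / ((i:ℕ).factorial : ℝ)))^2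
               + ν * (∑ i : Fin (k+1), w i * (t ^ (i:ℕ) / ((i:ℕ).factorial : ℝ)))^2 = 0) :
    False := by
  set α := Real.sqrt μ with hαdef
  set β := Real.sqrt (-ν) with hβdef
  have hα : α ^ 2 = μ := Real.sq_sqrt hμ.le
  have hβ : β ^ 2 = -ν := Real.sq_sqrt (neg_pos.mpr hν).le
  have hαpos : 0 < α := Real.sqrt_pos.mpr hμ
  have hβpos : 0 < β := Real.sqrt_pos.mpr (neg_pos.mpr hν)
  set P : ℝ[X] := ∑ i : Fin (k+1), C (α * v i / ((i:ℕ).factorial : ℝ)) * X ^ (i:ℕ) with hP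
  set Q : ℝ[X] := ∑ i : Fin (k+1), C (β * w i / ((i:ℕ).factorial : ℝ)) * X ^ (i:ℕ) with hQ
  have hPe : ∀ t : ℝ, P.eval t = α * ∑ i : Fin (k+1), v i * (t ^ (i:ℕ) / ((i:ℕ).factorial : ℝ)) := by
    intro t
    rw [hP]
    simp only [eval_finset_sum, eval_mul, eval_C, eval_pow, eval_X, Finset.mul_sum]
    exact Finset.sum_congr rfl fun i _ => by ring
  have hQe : ∀ t : ℝ, Q.eval t = β * ∑ i : Fin (k+1), w i * (t ^ (i:ℕ) / ((i:ℕ).factorial : ℝ)) := by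
    intro t
    rw [hQ]
    simp only [eval_finset_sum, eval_mul, eval_C, eval_pow, eval_X, Finset.mul_sum]
    exact Finset.sum_congr rfl fun i _ => by ring
  have hPQ : (P - Q) * (P + Q) = 0 := by
    apply Polynomial.funext
    intro t
    rw [eval_mul, eval_sub, eval_add, hPe t, hQe t, eval_zero]
    linear_combination h t + (∑ i : Fin (k+1), v i * (t ^ (i:ℕ) / ((i:ℕ).factorial : ℝ)))^2 * hα
      - (∑ i : Fin (k+1), w i * (t ^ (i:ℕ) / ((i:ℕ).factorial : ℝ)))^2 * hβ
  have key : ∀ ε : ℝ, ε = 1 ∨ ε = -1 →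
      (fun i : Fin (k+1) => α * v i - ε * (β * w i)) = 0 → False := by
    intro ε _ hu
    have h1 : ∀ i : Fin (k+1), α * v i - ε * (β * w i) = 0 := fun i => congrFun hu i
    have h2 : α * (∑ i : Fin (k+1), v i * v i) - ε * β * (∑ i : Fin (k+1), v i * w i) = 0 := by
      rw [Finset.mul_sum, Finset.mul_sum, ← Finset.sum_sub_distrib]
      exact Finset.sum_eq_zero fun i _ => by linear_combination (v i) * h1 i
    rw [hvv, hvw] at h2
    simp at h2
    nlinarith
  rcases mul_eq_zero.mp hPQ with h0 | h0
  · apply key 1 (Or.inl rfl)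
    funext i
    have := vanish_aux (fun i : Fin (k+1) => α * v i - 1 * (β * w i)) ?_
    · exact congrFun this i
    · intro t
      have := congrArg (fun p : ℝ[X] => p.eval t) h0
      simp only [eval_sub, eval_zero, hPe t, hQe t] at this
      rw [← this, Finset.mul_sum, Finset.mul_sum, ← Finset.sum_sub_distrib]
      exact Finset.sum_congr rfl fun i _ => by ring
  · apply key (-1) (Or.inr rfl)
    funext i
    have := vanish_aux (fun i : Fin (k+1) => α * v i - (-1) * (β * w i)) ?_
    · exact congrFun this i
    · intro t
      have := congrArg (fun p : ℝ[X] => p.eval t) h0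
      simp only [eval_add, eval_zero, hPe t, hQe t] at this
      beta_reduce
      rw [← this, Finset.mul_sum, Finset.mul_sum, ← Finset.sum_add_distrib]
      exact Finset.sum_congr rfl fun i _ => by ring

lemma pairzero_aux {k : ℕ} (v w : Fin (k+1) → ℝ) (μ ν : ℝ)
    (hvv : ∑ i : Fin (k+1), v i * v i = 1)
    (hww : ∑ i : Fin (k+1), w i * w i = 1)
    (hvw : ∑ i : Fin (k+1), v i * w i = 0)
    (hμ : μ ≠ 0)
    (h : ∀ t : ℝ, μ * (∑ i : Fin (k+1), v i * (t ^ (i:ℕ) / ((i:ℕ).factorial : ℝ)))^2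
               + ν * (∑ i : Fin (k+1), w i * (t ^ (i:ℕ) / ((i:ℕ).factorial : ℝ)))^2 = 0) :
    False := by
  have key : ∀ (v' w' : Fin (k+1) → ℝ) (μ' ν' : ℝ), 0 < μ' → 0 ≤ ν' →
      (∑ i : Fin (k+1), v' i * v' i = 1) →
      (∀ t : ℝ, μ' * (∑ i : Fin (k+1), v' i * (t ^ (i:ℕ) / ((i:ℕ).factorial : ℝ)))^2
               + ν' * (∑ i : Fin (k+1), w' i * (t ^ (i:ℕ) / ((i:ℕ).factorial : ℝ)))^2 = 0) →
      False := by
    intro v' w' μ' ν' hμ' hν' hvv' h'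
    have hz : v' = 0 := by
      apply vanish_aux
      intro t
      have ht := h' t
      have h2 : (∑ i : Fin (k+1), v' i * (t ^ (i:ℕ) / ((i:ℕ).factorial : ℝ)))^2 = 0 := by
        refine le_antisymm ?_ (sq_nonneg _)
        nlinarith [mul_nonneg hν' (sq_nonneg (∑ i : Fin (k+1), w' i * (t ^ (i:ℕ) / ((i:ℕ).factorial : ℝ))))]
      exact pow_eq_zero_iff (by norm_num) |>.mp h2
    rw [hz] at hvv'
    simp at hvv'
  rcases hμ.lt_or_gt with hμ' | hμ'
  · rcases le_or_gt ν 0 with hν | hν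
    · exact key v w (-μ) (-ν) (by linarith) (by linarith) hvv
        (fun t => by linear_combination - h t)
    · exact posneg_aux w v ν μ hww
        (by rw [← hvw]; exact Finset.sum_congr rfl fun i _ => by ring)
        hν hμ' (fun t => by linear_combination h t)
  · rcases le_or_gt 0 ν with hν | hν
    · exact key v w μ ν hμ' hν hvv h
    · exact posneg_aux v w μ ν hvv hvw hμ' hν h

open MvPolynomial

/-- The span `I` of the `2×2` minors of the Hankel matrix with rows
`(0!x₀, …, (k-1)!x_{k-1})` and `(1!x₁, …, k!x_k)` contains no nonzero quadratic form of
rank at most 2: if `q ∈ I` is represented by a symmetric matrix `A` of rank `≤ 2`,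
then `q = 0`. -/
theorem hankel_ideal_no_low_rank_quadrics (k : ℕ) (hk : 2 ≤ k)
    (q : MvPolynomial (Fin (k + 1)) ℝ)
    (hq : q ∈ Submodule.span ℝ
      {p : MvPolynomial (Fin (k + 1)) ℝ | ∃ a b : Fin k,
        p = (C ((a.val).factorial : ℝ) * X a.castSucc) *
              (C ((b.val + 1).factorial : ℝ) * X b.succ) -
            (C ((b.val).factorial : ℝ) * X b.castSucc) *
              (C ((a.val + 1).factorial : ℝ) * X a.succ)})
    (A : Matrix (Fin (k + 1)) (Fin (k + 1)) ℝ) (hA : A.IsSymm) (hrank : A.rank ≤ 2)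
    (hqA : q = ∑ i : Fin (k + 1), ∑ j : Fin (k + 1), C (A i j) * X i * X j) :
    q = 0 := by
  classical
  -- the moment curve
  set c : ℝ → Fin (k+1) → ℝ := fun t i => t ^ (i:ℕ) / ((i:ℕ).factorial : ℝ) with hc
  -- Step 1: q vanishes on the curve
  have heval : ∀ t : ℝ, ∑ i : Fin (k+1), ∑ j : Fin (k+1), A i j * c t i * c t j = 0 := by
    intro t
    have hq0 : aeval (c t) q = 0 := by
      have hker : q ∈ LinearMap.ker (aeval (R := ℝ) (c t)).toLinearMap := by
        refine Submodule.span_le.mpr ?_ hq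
        rintro p ⟨a, b, rfl⟩
        simp only [SetLike.mem_coe, LinearMap.mem_ker, AlgHom.toLinearMap_apply, map_sub,
          map_mul, aeval_C, aeval_X]
        rw [hc]
        simp only [Fin.coe_castSucc, Fin.val_succ]
        have h1 : ((a.val).factorial : ℝ) ≠ 0 := Nat.cast_ne_zero.mpr (Nat.factorial_ne_zero _)
        have h2 : ((b.val).factorial : ℝ) ≠ 0 := Nat.cast_ne_zero.mpr (Nat.factorial_ne_zero _)
        have h3 : ((a.val + 1).factorial : ℝ) ≠ 0 := Nat.cast_ne_zero.mpr (Nat.factorial_ne_zero _)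
        have h4 : ((b.val + 1).factorial : ℝ) ≠ 0 := Nat.cast_ne_zero.mpr (Nat.factorial_ne_zero _)
        field_simp
        simp only [Algebra.algebraMap_self_apply]
        ring
      simpa using hker
    rw [hqA] at hq0
    simpa [map_sum, map_mul, aeval_C, aeval_X] using hq0.symm.symm
  -- Step 2: spectral theorem
  have hH : A.IsHermitian := by
    show A.conjTranspose = A
    ext i j
    simpa [Matrix.conjTranspose_apply] using hA.apply i j
  set μ : Fin (k+1) → ℝ := hH.eigenvalues with hμdef
  set U : Matrix (Fin (k+1)) (Fin (k+1)) ℝ := (hH.eigenvectorUnitary : Matrix (Fin (k+1)) (Fin (k+1)) ℝ) with hUdef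
  have horth : ∀ l m, ∑ i : Fin (k+1), U i l * U i m = if l = m then (1:ℝ) else 0 := by
    intro l m
    have h1 : star U * U = 1 := hH.eigenvectorUnitary.2.1
    have := congrFun (congrFun h1 l) m
    rw [Matrix.mul_apply] at this
    simp only [Matrix.star_apply, star_trivial] at this
    rwa [Matrix.one_apply] at this
  have hAe : ∀ i j, A i j = ∑ l : Fin (k+1), U i l * μ l * U j l := by
    intro i j
    have := congrFun (congrFun hH.spectral_theorem i) j
    rw [Unitary.conjStarAlgAut_apply, Matrix.mul_apply] at this
    simp only [Matrix.mul_diagonal, Matrix.star_apply, star_trivial, Function.comp] at this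
    simpa [hUdef, hμdef] using this
  have hsum : ∀ t : ℝ, ∑ l : Fin (k+1), μ l * (∑ i : Fin (k+1), U i l * c t i)^2 = 0 := by
    intro t
    rw [← heval t]
    symm
    have expand : ∀ l : Fin (k+1), μ l * (∑ i : Fin (k+1), U i l * c t i)^2
        = ∑ i : Fin (k+1), ∑ j : Fin (k+1), U i l * μ l * U j l * (c t i * c t j) := by
      intro l
      rw [sq, Finset.sum_mul_sum, Finset.mul_sum]
      refine Finset.sum_congr rfl fun i _ => ?_
      rw [Finset.mul_sum]
      exact Finset.sum_congr rfl fun j _ => by ring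
    calc ∑ i : Fin (k+1), ∑ j : Fin (k+1), A i j * c t i * c t j
        = ∑ i : Fin (k+1), ∑ j : Fin (k+1), ∑ l : Fin (k+1),
            U i l * μ l * U j l * (c t i * c t j) := by
          refine Finset.sum_congr rfl fun i _ => Finset.sum_congr rfl fun j _ => ?_
          rw [hAe i j, Finset.sum_mul, Finset.sum_mul]
          exact Finset.sum_congr rfl fun l _ => by ring
      _ = ∑ i : Fin (k+1), ∑ l : Fin (k+1), ∑ j : Fin (k+1),
            U i l * μ l * U j l * (c t i * c t j) :=
          Finset.sum_congr rfl fun i _ => Finset.sum_comm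
      _ = ∑ l : Fin (k+1), ∑ i : Fin (k+1), ∑ j : Fin (k+1),
            U i l * μ l * U j l * (c t i * c t j) := Finset.sum_comm
      _ = ∑ l : Fin (k+1), μ l * (∑ i : Fin (k+1), U i l * c t i)^2 :=
          Finset.sum_congr rfl fun l _ => (expand l).symm
  have hcard : Fintype.card {i // μ i ≠ 0} ≤ 2 := by
    rw [← hH.rank_eq_card_non_zero_eigs]
    exact hrank
  -- Step 3: all eigenvalues vanish
  have hzero : ∀ l, μ l = 0 := by
    by_contra hcon
    push_neg at hcon
    obtain ⟨a, ha⟩ := hcon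
    obtain ⟨b, hba, hother⟩ : ∃ b, b ≠ a ∧ ∀ x, x ≠ a → x ≠ b → μ x = 0 := by
      by_cases hex : ∃ b, b ≠ a ∧ μ b ≠ 0
      · obtain ⟨b, hba, hbne⟩ := hex
        refine ⟨b, hba, fun x hxa hxb => ?_⟩
        by_contra hx
        have h3 : 2 < Fintype.card {i // μ i ≠ 0} :=
          Fintype.two_lt_card_iff.mpr ⟨⟨x, hx⟩, ⟨a, ha⟩, ⟨b, hbne⟩,
            by simp [Subtype.ext_iff, hxa, hxb, Ne.symm hba]⟩
        omega
      · push_neg at hex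
        obtain ⟨b, hba⟩ := Fintype.exists_ne_of_one_lt_card (by simp; omega) a
        exact ⟨b, hba, fun x hxa _ => hex x hxa⟩
    have hpair : ∀ t : ℝ, μ a * (∑ i : Fin (k+1), U i a * c t i)^2
        + μ b * (∑ i : Fin (k+1), U i b * c t i)^2 = 0 := by
      intro t
      have h0 := hsum t
      rw [← Finset.sum_subset (Finset.subset_univ {a, b})
        (fun x _ hx => by
          simp only [Finset.mem_insert, Finset.mem_singleton, not_or] at hx
          rw [hother x hx.1 hx.2, zero_mul])] at h0
      rwa [Finset.sum_pair hba.symm] at h0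
    refine pairzero_aux (fun i => U i a) (fun i => U i b) (μ a) (μ b) ?_ ?_ ?_ ha ?_
    · simpa using horth a a
    · simpa using horth b b
    · simpa [Ne.symm hba] using horth a b
    · intro t
      have := hpair t
      simpa [hc] using this
  -- Step 4: conclude
  have hA0 : ∀ i j, A i j = 0 := by
    intro i j
    rw [hAe i j]
    exact Finset.sum_eq_zero fun l _ => by rw [hzero l]; ring
  rw [hqA]
  refine Finset.sum_eq_zero fun i _ => Finset.sum_eq_zero fun j _ => ?_
  rw [hA0 i j]
  simp
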